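/- For a strongly regular graph Γ with valency k and smallest eigenvalue -m (m > 0), every clique C of Γ satisfies |C| ≤ 1 + k/m. -/

import Mathlib

open Matrix Finset

lemma hoffman_aux_eigvec {V : Type*} [Fintype V] [DecidableEq V] (A : Matrix V V ℝ) {t : ℝ}
    (ht : t ∈ spectrum ℝ A) : ∃ v : V → ℝ, v ≠ 0 ∧ A *ᵥ v = t • v := by
  rw [← AlgEquiv.spectrum_eq (Matrix.toLinAlgEquiv' : Matrix V V ℝ ≃ₐ[ℝ] _)] at ht
  obtain ⟨v, hv⟩ := (Module.End.hasEigenvalue_iff_mem_spectrum.mpr ht).exists_hasEigenvector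
  refine ⟨v, hv.2, ?_⟩
  have := hv.apply_eq_smul
  rw [Matrix.toLinAlgEquiv'] at this
  simpa [Matrix.toLin'_apply] using this

set_option maxHeartbeats 1000000 in
/-- Hoffman clique bound: If `Γ` is a connected
`(n,k,λ,μ)`-strongly regular graph whose adjacency matrix has smallest
eigenvalue `-m` with `m > 0`, then every clique `C` satisfies
`|C| ≤ 1 + k/m`. -/
theorem hoffman_clique_bound {V : Type*} [Fintype V] [DecidableEq V]
    (G : SimpleGraph V) [DecidableRel G.Adj] (n k lam mu : ℕ)
    (h : G.IsSRGWith n k lam mu) (hconn : G.Connected)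
    (m : ℝ) (hm : 0 < m)
    (hmin : -m ∈ spectrum ℝ (G.adjMatrix ℝ))
    (hleast : ∀ t ∈ spectrum ℝ (G.adjMatrix ℝ), -m ≤ t)
    (C : Finset V) (hC : G.IsClique (C : Set V)) :
    (C.card : ℝ) ≤ 1 + k / m := by
  haveI : Nonempty V := hconn.nonempty
  set A : Matrix V V ℝ := G.adjMatrix ℝ with hA
  obtain ⟨v, hv0, hv⟩ := hoffman_aux_eigvec A hmin
  obtain ⟨i0, hi0⟩ := Function.ne_iff.mp hv0
  have hcard : (Fintype.card V : ℝ) = n := by rw [h.card]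
  have hn1 : (1 : ℝ) ≤ n := by
    have := Fintype.card_pos (α := V)
    rw [h.card] at this; exact_mod_cast this
  have hn0 : (0:ℝ) < n := lt_of_lt_of_le one_pos hn1
  set c : ℝ := (C.card : ℝ) with hc
  have hc0 : 0 ≤ c := by positivity
  by_cases hcomp : ∀ x y : V, x ≠ y → G.Adj x y
  · -- complete graph case
    have hnb : ∀ i : V, G.neighborFinset i = Finset.univ.erase i := by
      intro i
      ext u
      simp only [SimpleGraph.mem_neighborFinset, Finset.mem_erase, Finset.mem_univ, and_true]
      constructor
      · intro hadj; exact (G.ne_of_adj hadj).symm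
      · intro hne; exact hcomp i u (Ne.symm hne)
    have hS : ∀ i, v i * (1 - m) = ∑ j, v j := by
      intro i
      have h1 : (A *ᵥ v) i = (∑ j, v j) - v i := by
        rw [hA, SimpleGraph.adjMatrix_mulVec_apply, hnb i,
          Finset.sum_erase_eq_sub (Finset.mem_univ i)]
      have h2 : (A *ᵥ v) i = -m * v i := by rw [hv]; simp
      rw [h2] at h1; linarith
    have hm1 : m = 1 := by
      by_contra hm1
      have hne1 : (1:ℝ) - m ≠ 0 := fun hh => hm1 (by linarith)
      have hconst : ∀ i, v i = (∑ j, v j) / (1 - m) := by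
        intro i
        rw [eq_div_iff hne1]
        exact hS i
      have hSeq : (∑ j, v j) = (Fintype.card V : ℝ) * ((∑ j, v j) / (1 - m)) := by
        conv_lhs => rw [Finset.sum_congr rfl (fun j _ => hconst j)]
        simp [Finset.sum_const, mul_comm]
      by_cases hS0 : (∑ j, v j) = 0
      · apply hv0; ext i; rw [hconst i, hS0]; simp
      · have h5 : (∑ j, v j) * (1 - m) = (Fintype.card V : ℝ) * (∑ j, v j) := by
          calc (∑ j, v j) * (1 - m)
              = ((Fintype.card V : ℝ) * ((∑ j, v j) / (1 - m))) * (1 - m) := by rw [← hSeq]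
            _ = (Fintype.card V : ℝ) * (∑ j, v j) := by field_simp
        have h6 : (∑ j, v j) * ((1 - m) - (Fintype.card V : ℝ)) = 0 := by
          linear_combination h5
        rcases mul_eq_zero.mp h6 with h' | h'
        · exact hS0 h'
        · have hge : (1:ℝ) ≤ (Fintype.card V : ℝ) := by exact_mod_cast Fintype.card_pos
          linarith
    obtain ⟨w⟩ := ‹Nonempty V›
    have hdeg : (k : ℝ) = (Fintype.card V : ℝ) - 1 := by
      have h1 : G.degree w = k := h.regular w
      have h3 : G.degree w = Fintype.card V - 1 := by
        rw [SimpleGraph.degree, hnb w, Finset.card_erase_of_mem (Finset.mem_univ w),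
          Finset.card_univ]
      have hge : 1 ≤ Fintype.card V := Fintype.card_pos
      rw [← h1, h3]
      push_cast [Nat.cast_sub hge]
      ring
    have hcle : c ≤ (Fintype.card V : ℝ) := by
      rw [hc]; exact_mod_cast Finset.card_le_card (Finset.subset_univ C)
    rw [hm1, div_one]
    linarith
  · -- non-complete case
    push_neg at hcomp
    obtain ⟨x, y, hxy, hnadj⟩ := hcomp
    have hmuk : (mu:ℝ) ≤ k := by
      have h1 : Fintype.card (G.commonNeighbors x y) = mu := h.of_not_adj hxy hnadj
      have hsub := G.commonNeighbors_subset_neighborSet_left x y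
      have h2 : Fintype.card (G.commonNeighbors x y) ≤ Fintype.card (G.neighborSet x) :=
        Fintype.card_le_of_injective (Set.inclusion hsub) (Set.inclusion_injective hsub)
      have h3 : Fintype.card (G.neighborSet x) = k := by
        rw [G.card_neighborSet_eq_degree]; exact h.regular x
      rw [h1, h3] at h2
      exact_mod_cast h2
    set Jm : Matrix V V ℝ := Matrix.of (fun _ _ => (1:ℝ)) with hJm
    have hAJ : A * Jm = (k:ℝ) • Jm := by
      ext i j
      rw [hA, hJm]
      rw [Matrix.smul_apply, SimpleGraph.adjMatrix_mul_apply]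
      simp [h.regular i]
    have hJA : Jm * A = (k:ℝ) • Jm := by
      ext i j
      rw [hA, hJm]
      rw [Matrix.smul_apply, SimpleGraph.mul_adjMatrix_apply]
      simp [h.regular j]
    have hJJ : Jm * Jm = (n:ℝ) • Jm := by
      ext i j
      rw [hJm, Matrix.smul_apply, Matrix.mul_apply]
      simp [hcard]
    have hAA : A * A = (k:ℝ) • (1 : Matrix V V ℝ) + (lam:ℝ) • A + (mu:ℝ) • (Jm - 1 - A) := by
      have h1 := h.matrix_eq (α := ℝ)
      have h2 := SimpleGraph.one_add_adjMatrix_add_compl_adjMatrix_eq_allOnes (G := G) (α := ℝ)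
      have h3 : (G.adjMatrix ℝ).compl = Gᶜ.adjMatrix ℝ := by
        ext i j
        simp only [Matrix.compl, SimpleGraph.adjMatrix_apply, SimpleGraph.compl_adj,
          Matrix.of_apply, Matrix.one_apply]
        split_ifs <;> simp_all
      have h4 : Gᶜ.adjMatrix ℝ = Jm - 1 - A := by
        rw [← h3, hJm, hA, show (of fun _ _ => (1:ℝ) : Matrix V V ℝ) = of 1 from rfl, ← h2]
        ext i j; simp [Matrix.compl]; ring
      rw [← h4, hA, ← pow_two, h1]
      push_cast [← Nat.cast_smul_eq_nsmul ℝ]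
      ring_nf
    -- sum of eigenvector entries is zero
    have hsum : ∑ j, v j = 0 := by
      have h1 : (fun _ => (1:ℝ)) ⬝ᵥ (A *ᵥ v) = (k:ℝ) * ∑ j, v j := by
        rw [Matrix.dotProduct_mulVec]
        have he : (fun _ => (1:ℝ)) ᵥ* A = fun _ => (k:ℝ) := by
          ext j
          rw [hA, SimpleGraph.adjMatrix_vecMul_apply]
          simp [h.regular j]
        rw [he, dotProduct, Finset.mul_sum]
      have h2 : (fun _ => (1:ℝ)) ⬝ᵥ (A *ᵥ v) = -m * ∑ j, v j := by
        rw [hv, dotProduct, Finset.mul_sum]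
        simp [mul_comm]
      have h3 : ((k:ℝ) + m) * ∑ j, v j = 0 := by
        rw [h1] at h2; linarith
      have hkm : (0:ℝ) < (k:ℝ) + m := by positivity
      exact (mul_eq_zero.mp h3).resolve_left (ne_of_gt hkm)
    have hJv : Jm *ᵥ v = 0 := by
      ext i; simp [hJm, mulVec, dotProduct, hsum]
    -- quadratic equation for m
    have hquad : m * m = (k:ℝ) + (lam:ℝ) * (-m) + (mu:ℝ) * (-1 + m) := by
      have h1 : (A * A) *ᵥ v = (m*m) • v := by
        rw [← Matrix.mulVec_mulVec, hv, Matrix.mulVec_smul, hv, smul_smul]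
        congr 1; ring
      have h2 : ((k:ℝ) • (1 : Matrix V V ℝ) + (lam:ℝ) • A + (mu:ℝ) • (Jm - 1 - A)) *ᵥ v
          = ((k:ℝ) + (lam:ℝ) * (-m) + (mu:ℝ) * (-1 + m)) • v := by
        simp only [Matrix.add_mulVec, Matrix.sub_mulVec, Matrix.smul_mulVec,
          Matrix.one_mulVec, hv, hJv, smul_smul]
        ext i
        simp only [Pi.add_apply, Pi.sub_apply, Pi.smul_apply, Pi.zero_apply, smul_eq_mul]
        ring
      rw [hAA, h2] at h1
      have h3 := congrFun h1 i0
      simp only [Pi.smul_apply, smul_eq_mul] at h3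
      exact (mul_right_cancel₀ hi0 h3).symm
    -- k^2 identity
    have hk2 : (k:ℝ) * k = (k:ℝ) + (lam:ℝ) * k + (mu:ℝ) * ((n:ℝ) - 1 - k) := by
      have hone : A *ᵥ (fun _ => (1:ℝ)) = fun _ => (k:ℝ) := by
        ext i
        rw [hA, SimpleGraph.adjMatrix_mulVec_apply]
        simp [h.regular i]
      have hJone : Jm *ᵥ (fun _ => (1:ℝ)) = fun _ => (n:ℝ) := by
        ext i; simp [hJm, mulVec, dotProduct, hcard]
      have h1 : (A * A) *ᵥ (fun _ => (1:ℝ)) = fun _ => (k:ℝ) * k := by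
        rw [← Matrix.mulVec_mulVec, hone]
        have hk1 : (fun _ => (k:ℝ)) = ((k:ℝ) • fun _ => (1:ℝ) : V → ℝ) := by
          ext i; simp
        rw [hk1, Matrix.mulVec_smul, hone]
        ext i; simp [mul_comm]
      rw [hAA] at h1
      have h3 := congrFun h1 i0
      simp only [Matrix.add_mulVec, Matrix.sub_mulVec, Matrix.smul_mulVec,
        Matrix.one_mulVec, hone, hJone, Pi.add_apply, Pi.sub_apply, Pi.smul_apply,
        smul_eq_mul] at h3
      linarith [h3]
    -- define r and s
    set r : ℝ := ((k:ℝ) - mu) / m with hrdef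
    have hmr : m * r = (k:ℝ) - mu := by
      rw [hrdef]; field_simp
    have hr0 : 0 ≤ r := by
      rw [hrdef]
      exact div_nonneg (by linarith) hm.le
    have hr2 : r = m + (lam:ℝ) - mu := by
      apply mul_left_cancel₀ (ne_of_gt hm)
      linear_combination hmr - hquad
    have hnmu : (n:ℝ) * mu = ((k:ℝ) - r) * ((k:ℝ) + m) := by
      linear_combination -hk2 + (k:ℝ) * hr2 + hmr
    set s : ℝ := ((k:ℝ) - r) / n with hsdef
    have hs : s * n = (k:ℝ) - r := by
      rw [hsdef]; field_simp
    set N : Matrix V V ℝ := r • (1 : Matrix V V ℝ) + s • Jm - A with hN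
    have hrm : (0:ℝ) < r + m := by linarith
    have hNN : N * N = (r + m) • N := by
      have hmu' : (mu:ℝ) = s * ((k:ℝ) + m) := by
        apply mul_left_cancel₀ (ne_of_gt hn0)
        linear_combination hnmu - ((k:ℝ)+m) * hs
      have expand : N * N
          = (r*r) • (1 : Matrix V V ℝ) + (r*s) • Jm - r • A
            + ((s*r) • Jm + (s*s) • (Jm*Jm) - s • (Jm * A))
            - (r • A + s • (A * Jm) - A * A) := by
        rw [hN]
        simp only [Matrix.add_mul, Matrix.sub_mul, Matrix.mul_add, Matrix.mul_sub,
          smul_mul_assoc, mul_smul_comm, Matrix.one_mul, Matrix.mul_one, smul_smul,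
          smul_add, smul_sub]
        abel
      rw [expand, hJJ, hJA, hAJ, hAA, hN]
      match_scalars
      · linear_combination -hmr
      · linear_combination s * hs + hmu'
      · linear_combination -hr2
    have hNsym : Nᵀ = N := by
      have hJsym : Jmᵀ = Jm := by
        ext i j; simp [hJm]
      rw [hN, hA]
      simp only [Matrix.transpose_sub, Matrix.transpose_add, Matrix.transpose_smul,
        Matrix.transpose_one, SimpleGraph.transpose_adjMatrix, hJsym]
    -- the characteristic vector of the clique
    set xv : V → ℝ := fun i => if i ∈ C then 1 else 0 with hxv
    have hquadpos : 0 ≤ xv ⬝ᵥ (N *ᵥ xv) := by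
      have h1 : (r + m) * (xv ⬝ᵥ (N *ᵥ xv)) = (N *ᵥ xv) ⬝ᵥ (N *ᵥ xv) := by
        calc (r + m) * (xv ⬝ᵥ (N *ᵥ xv)) = xv ⬝ᵥ ((r + m) • (N *ᵥ xv)) := by
              rw [dotProduct_smul]; simp
          _ = xv ⬝ᵥ (((r + m) • N) *ᵥ xv) := by rw [Matrix.smul_mulVec]
          _ = xv ⬝ᵥ ((N * N) *ᵥ xv) := by rw [hNN]
          _ = xv ⬝ᵥ (N *ᵥ (N *ᵥ xv)) := by rw [Matrix.mulVec_mulVec]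
          _ = (xv ᵥ* N) ⬝ᵥ (N *ᵥ xv) := by rw [Matrix.dotProduct_mulVec]
          _ = (N *ᵥ xv) ⬝ᵥ (N *ᵥ xv) := by
              have hvm : xv ᵥ* N = N *ᵥ xv := by
                rw [← hNsym, Matrix.vecMul_transpose, hNsym]
              rw [hvm]
      have h5 : 0 ≤ (N *ᵥ xv) ⬝ᵥ (N *ᵥ xv) :=
        Finset.sum_nonneg fun i _ => mul_self_nonneg _
      nlinarith [h1, h5, hrm]
    have hCfilter : Finset.univ.filter (fun i => i ∈ C) = C := by
      rw [Finset.filter_mem_eq_inter, Finset.univ_inter]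
    have hdotx : xv ⬝ᵥ xv = c := by
      rw [dotProduct, hc]
      have : ∀ i, xv i * xv i = if i ∈ C then (1:ℝ) else 0 := by
        intro i; rw [hxv]; dsimp only; split_ifs <;> ring
      rw [Finset.sum_congr rfl (fun i _ => this i), Finset.sum_boole, hCfilter]
    have hJx : Jm *ᵥ xv = fun _ => c := by
      ext i
      rw [hJm, hc]
      show ∑ j, (1:ℝ) * xv j = _
      simp only [one_mul, hxv]
      rw [Finset.sum_boole, hCfilter]
    have hxdotconst : ∀ t : ℝ, xv ⬝ᵥ (fun _ => t) = c * t := by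
      intro t
      rw [dotProduct, hc]
      have : ∀ i, xv i * t = if i ∈ C then t else 0 := by
        intro i; rw [hxv]; dsimp only; split_ifs <;> ring
      rw [Finset.sum_congr rfl (fun i _ => this i), Finset.sum_ite_mem, Finset.univ_inter,
        Finset.sum_const, nsmul_eq_mul]
    have hAx : xv ⬝ᵥ (A *ᵥ xv) = c * c - c := by
      have hin : ∀ i ∈ C, (A *ᵥ xv) i = c - 1 := by
        intro i hi
        rw [hA, SimpleGraph.adjMatrix_mulVec_apply]
        have heq : ∀ u, xv u = if u ∈ C then (1:ℝ) else 0 := fun u => by rw [hxv]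
        rw [Finset.sum_congr rfl (fun u _ => heq u), Finset.sum_boole]
        have hfil : (G.neighborFinset i).filter (fun u => u ∈ C) = C.erase i := by
          ext u
          simp only [Finset.mem_filter, SimpleGraph.mem_neighborFinset, Finset.mem_erase]
          constructor
          · rintro ⟨hadj, huC⟩; exact ⟨(G.ne_of_adj hadj).symm, huC⟩
          · rintro ⟨hne, huC⟩; exact ⟨hC hi huC (Ne.symm hne), huC⟩
        rw [hfil, Finset.card_erase_of_mem hi, hc]
        have h1C : 1 ≤ C.card := Finset.card_pos.mpr ⟨i, hi⟩
        push_cast [Nat.cast_sub h1C]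
        ring
      rw [dotProduct]
      have : ∀ i, xv i * (A *ᵥ xv) i = if i ∈ C then (A *ᵥ xv) i else 0 := by
        intro i; rw [hxv]; dsimp only; split_ifs <;> ring
      rw [Finset.sum_congr rfl (fun i _ => this i), Finset.sum_ite_mem, Finset.univ_inter,
        Finset.sum_congr rfl hin, Finset.sum_const, nsmul_eq_mul, ← hc]
      ring
    have hexp : xv ⬝ᵥ (N *ᵥ xv) = r * c + s * (c * c) - (c * c - c) := by
      rw [hN, Matrix.sub_mulVec, Matrix.add_mulVec, Matrix.smul_mulVec,
        Matrix.smul_mulVec, Matrix.one_mulVec, hJx,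
        dotProduct_sub, dotProduct_add, dotProduct_smul,
        dotProduct_smul, hdotx, hAx, hxdotconst]
      simp only [smul_eq_mul]
    -- final arithmetic
    have hP : 0 ≤ r * c + s * (c * c) - (c * c - c) := by rw [← hexp]; exact hquadpos
    have hE : (n:ℝ) * (c * (1 + r) * ((k:ℝ) + m - m * c))
        = ((k:ℝ) + m) * ((n:ℝ) * (r * c + s * (c * c) - (c * c - c))) := by
      linear_combination (-(n:ℝ) * c * c) * hmr + (c * c) * hnmu + (-((k:ℝ) + m) * c * c) * hs
    have hkm : (0:ℝ) < (k:ℝ) + m := by positivity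
    have hkey : 0 ≤ c * (1 + r) * ((k:ℝ) + m - m * c) := by
      have h1 : 0 ≤ (n:ℝ) * (c * (1 + r) * ((k:ℝ) + m - m * c)) := by
        rw [hE]
        exact mul_nonneg hkm.le (mul_nonneg hn0.le hP)
      exact (mul_nonneg_iff_of_pos_left hn0).mp h1
    have hfinal : m * c ≤ (k:ℝ) + m := by
      rcases eq_or_lt_of_le hc0 with hcz | hcp
      · rw [← hcz, mul_zero]; positivity
      · have hpos : 0 < c * (1 + r) := mul_pos hcp (by linarith)
        have h3 := (mul_nonneg_iff_of_pos_left hpos).mp hkey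
        linarith
    rw [hc] at hfinal ⊢
    rw [← sub_nonneg]
    have : 1 + (k:ℝ) / m - (C.card : ℝ) = (((k:ℝ) + m) - m * (C.card : ℝ)) / m := by
      field_simp; ring
    rw [this]
    apply div_nonneg _ hm.le
    linarith
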